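/- For every n ∈ ℕ and all real numbers u and v, the series with m-th term ((−1)^m/m!) · (u − v)^m · h_{n+m}(v) converges and its sum equals h_n(u). (This Taylor re-expansion of the Hermite functions about a new center is the identity underlying the Multipole-to-Local (M2L) step of the Fast Gauss Transform.) -/

import Mathlib

open Real Polynomial

/-- Auxiliary polynomial sequence: `gaussPoly n` satisfies
`(d/dx)^n exp(-x²) = (gaussPoly n)(x) · exp(-x²)`. -/
noncomputable def gaussPoly : ℕ → Polynomial ℤ
  | 0 => 1
  | n + 1 => derivative (gaussPoly n) - C 2 * X * gaussPoly n

lemma iteratedDeriv_complex_gauss (n : ℕ) (z : ℂ) :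
    iteratedDeriv n (fun w : ℂ => Complex.exp (-w ^ 2)) z =
      aeval z (gaussPoly n) * Complex.exp (-z ^ 2) := by
  induction n generalizing z with
  | zero => simp [gaussPoly]
  | succ n ih =>
    rw [iteratedDeriv_succ]
    have hfun : iteratedDeriv n (fun w : ℂ => Complex.exp (-w ^ 2)) =
        fun w => aeval w (gaussPoly n) * Complex.exp (-w ^ 2) := funext ih
    rw [hfun]
    have h1 : HasDerivAt (fun w : ℂ => aeval w (gaussPoly n))
        (aeval z (derivative (gaussPoly n))) z := (gaussPoly n).hasDerivAt_aeval z
    have h2 : HasDerivAt (fun w : ℂ => Complex.exp (-w ^ 2))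
        (Complex.exp (-z ^ 2) * -(2 * z)) z := by
      have := (Complex.hasDerivAt_exp (-z ^ 2)).comp z ((hasDerivAt_pow 2 z).fun_neg)
      simpa [Function.comp_def] using this
    have := (h1.fun_mul h2).deriv
    rw [this, gaussPoly]
    simp only [map_sub, map_mul, aeval_X, map_ofNat]
    ring

lemma iteratedDeriv_real_gauss (n : ℕ) (x : ℝ) :
    iteratedDeriv n (fun s : ℝ => Real.exp (-s ^ 2)) x =
      aeval x (gaussPoly n) * Real.exp (-x ^ 2) := by
  induction n generalizing x with
  | zero => simp [gaussPoly]
  | succ n ih =>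
    rw [iteratedDeriv_succ]
    have hfun : iteratedDeriv n (fun s : ℝ => Real.exp (-s ^ 2)) =
        fun s => aeval s (gaussPoly n) * Real.exp (-s ^ 2) := funext ih
    rw [hfun]
    have h1 : HasDerivAt (fun s : ℝ => aeval s (gaussPoly n))
        (aeval x (derivative (gaussPoly n))) x := (gaussPoly n).hasDerivAt_aeval x
    have h2 : HasDerivAt (fun s : ℝ => Real.exp (-s ^ 2))
        (Real.exp (-x ^ 2) * -(2 * x)) x := by
      have := (Real.hasDerivAt_exp (-x ^ 2)).comp x ((hasDerivAt_pow 2 x).fun_neg)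
      simpa [Function.comp_def] using this
    have := (h1.fun_mul h2).deriv
    rw [this, gaussPoly]
    simp only [map_sub, map_mul, aeval_X, map_ofNat]
    ring

lemma iteratedDeriv_gauss_ofReal (n : ℕ) (x : ℝ) :
    iteratedDeriv n (fun w : ℂ => Complex.exp (-w ^ 2)) (x : ℂ) =
      ((iteratedDeriv n (fun s : ℝ => Real.exp (-s ^ 2)) x : ℝ) : ℂ) := by
  rw [iteratedDeriv_complex_gauss, iteratedDeriv_real_gauss]
  have haev : aeval (x : ℂ) (gaussPoly n) = ((aeval x (gaussPoly n) : ℝ) : ℂ) :=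
    Polynomial.aeval_algHom_apply Complex.ofRealHom.toIntAlgHom x (gaussPoly n)
  rw [haev]
  push_cast [Complex.ofReal_exp]
  ring_nf

/-- The Hermite function `h_n(t) = (−1)ⁿ · (dⁿ/dtⁿ) exp(−t²)`. -/
noncomputable def hermiteFun (n : ℕ) (t : ℝ) : ℝ :=
  (-1) ^ n * iteratedDeriv n (fun s : ℝ => Real.exp (-s ^ 2)) t

/-- **Taylor re-expansion of Hermite functions about a new center (M2L identity).**
For every `n ∈ ℕ` and reals `u, v`, the series with `m`-th term
`((−1)^m/m!)·(u−v)^m·h_{n+m}(v)` converges with sum `h_n(u)`. -/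
theorem hermite_taylor_reexpansion (n : ℕ) (u v : ℝ) :
    HasSum (fun m : ℕ =>
        ((-1) ^ m / (m.factorial : ℝ)) * (u - v) ^ m * hermiteFun (n + m) v)
      (hermiteFun n u) := by
  set g : ℂ → ℂ := fun w => Complex.exp (-w ^ 2) with hg_def
  have hF : Differentiable ℂ (iteratedDeriv n g) := by
    have : iteratedDeriv n g = fun w => aeval w (gaussPoly n) * Complex.exp (-w ^ 2) :=
      funext (iteratedDeriv_complex_gauss n)
    rw [this]
    exact (gaussPoly n).differentiable_aeval.mul
      (Complex.differentiable_exp.comp ((differentiable_pow 2).neg))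
  have hs := Complex.hasSum_taylorSeries_of_entire hF (v : ℂ) (u : ℂ)
  have hiter : ∀ m : ℕ, iteratedDeriv m (iteratedDeriv n g) = iteratedDeriv (n + m) g := by
    intro m
    simp only [iteratedDeriv_eq_iterate]
    rw [Nat.add_comm, Function.iterate_add]
    rfl
  simp only [hiter] at hs
  have hs2 := (hs.mul_left ((-1 : ℂ) ^ n)).mapL Complex.reCLM
  convert hs2 using 2 with m
  · rw [iteratedDeriv_gauss_ofReal]
    simp only [smul_eq_mul, Complex.reCLM_apply]
    have : ((u : ℂ) - (v : ℂ)) = ((u - v : ℝ) : ℂ) := by push_cast; ring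
    rw [this]
    have hm : (m.factorial : ℂ) = ((m.factorial : ℝ) : ℂ) := by push_cast; ring
    rw [hm, ← Complex.ofReal_inv, ← Complex.ofReal_pow]
    rw [show ((-1 : ℂ) ^ n) = (((-1 : ℝ) ^ n : ℝ) : ℂ) by push_cast; ring]
    rw [← Complex.ofReal_mul, ← Complex.ofReal_mul, ← Complex.ofReal_mul, Complex.ofReal_re]
    rw [hermiteFun]
    have hfac : (m.factorial : ℝ) ≠ 0 := Nat.cast_ne_zero.mpr m.factorial_ne_zero
    have hpow : ((-1 : ℝ) ^ m) * ((-1 : ℝ) ^ (n + m)) = (-1) ^ n := by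
      rw [pow_add, ← mul_assoc, mul_comm ((-1:ℝ)^m), mul_assoc, ← pow_add,
        ← two_mul, pow_mul]
      norm_num
    linear_combination ((u - v) ^ m *
      iteratedDeriv (n + m) (fun s : ℝ => Real.exp (-s ^ 2)) v * (m.factorial : ℝ)⁻¹) * hpow
  · rw [iteratedDeriv_gauss_ofReal]
    simp only [Complex.reCLM_apply, hermiteFun]
    rw [show ((-1 : ℂ) ^ n) = (((-1 : ℝ) ^ n : ℝ) : ℂ) by push_cast; ring,
      ← Complex.ofReal_mul, Complex.ofReal_re]
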